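/- Let g be an n-dimensional nilpotent real Lie algebra. Then there exists a basis e¹, …, eⁿ of g* such that for each i, the alternating 2-form de^i (given by de^i(X,Y) = −e^i([X,Y])) lies in the linear span of {e^j ∧ e^k : 1 ≤ j < k ≤ i−1}. In particular, the filtration defined by g*₁ = ker d and g*_i = {v ∈ g* : dv ∈ Λ² g*_{i−1}} satisfies g*_s = g* for some s. -/

import Mathlib

set_option linter.unusedSectionVars false

open scoped TensorProduct

noncomputable section

namespace GKTest

variable {g : Type} [LieRing g] [LieAlgebra ℝ g]

/-- Auxiliary reindexing: `skip2 i j m` is the `m`-th element (0-indexed) of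
`{0,…,k} \ {i,j}` when `i < j`. -/
def skip2 (i j m : ℕ) : ℕ := if m < i then m else if m + 1 < j then m + 1 else m + 2

lemma skip2_le (i j m : ℕ) : skip2 i j m ≤ m + 2 := by
  unfold skip2; split_ifs <;> omega

/-- The argument list `(⁅X i, X j⁆, X₀, …, X̂ᵢ, …, X̂ⱼ, …, X_k)` used in the
Chevalley–Eilenberg formula. -/
def ceArg {k : ℕ} (X : Fin (k + 1) → g) (i j : Fin (k + 1)) : Fin k → g :=
  fun l =>
    if h : (l : ℕ) = 0 then ⁅X i, X j⁆
    else X ⟨skip2 (i : ℕ) (j : ℕ) ((l : ℕ) - 1), by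
      have h1 := skip2_le (i : ℕ) (j : ℕ) ((l : ℕ) - 1)
      have h2 := l.isLt
      omega⟩

/-- The Chevalley–Eilenberg differential of an alternating `k`-form, as a raw function:
`dα(X₀,…,X_k) = ∑_{i<j} (−1)^{i+j} α(⁅X_i,X_j⁆, X₀,…,X̂ᵢ,…,X̂ⱼ,…,X_k)`. -/
def ceD {k : ℕ} (α : g [⋀^Fin k]→ₗ[ℝ] ℝ) (X : Fin (k + 1) → g) : ℝ :=
  ∑ i : Fin (k + 1), ∑ j : Fin (k + 1),
    if (i : ℕ) < (j : ℕ) then (-1 : ℝ) ^ ((i : ℕ) + (j : ℕ)) * α (ceArg X i j) else 0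

end GKTest

namespace GKTest

/-- `ω ∈ Λ²S`: the 2-form `ω` is a finite sum of wedges of 1-forms belonging to `S`. -/
def inLambdaTwo {g : Type} [LieRing g] [LieAlgebra ℝ g]
    (S : Set (Module.Dual ℝ g)) (ω : g → g → ℝ) : Prop :=
  ∃ (m : ℕ) (a b : Fin m → Module.Dual ℝ g),
    (∀ l, a l ∈ S) ∧ (∀ l, b l ∈ S) ∧
    ∀ X Y, ω X Y = ∑ l, (a l X * b l Y - a l Y * b l X)

/-- The filtration of `g*` given by `g*₀ = {0}`, `g*ᵢ₊₁ = {v : dv ∈ Λ² g*ᵢ}`;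
in particular `g*₁ = ker d`. Here `dv` is the 2-form `(X,Y) ↦ −v(⁅X,Y⁆)`. -/
def ceFilt (g : Type) [LieRing g] [LieAlgebra ℝ g] : ℕ → Set (Module.Dual ℝ g)
  | 0 => {0}
  | (i + 1) => {v | inLambdaTwo (ceFilt g i) fun X Y => -(v ⁅X, Y⁆)}

end GKTest

namespace GKTest

section Helpers

variable {g : Type} [LieRing g] [LieAlgebra ℝ g]

lemma zero_mem_ceFilt : ∀ i, (0 : Module.Dual ℝ g) ∈ ceFilt g i
  | 0 => rfl
  | (i+1) => ⟨0, Fin.elim0, Fin.elim0, (fun l => l.elim0), (fun l => l.elim0), by simp⟩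

lemma ceFilt_mono : ∀ i, ceFilt g i ⊆ ceFilt g (i+1)
  | 0 => by
      rintro v hv
      have : v = 0 := hv
      subst this; exact zero_mem_ceFilt 1
  | (i+1) => by
      rintro v ⟨m, a, b, ha, hb, h⟩
      exact ⟨m, a, b, fun l => ceFilt_mono i (ha l), fun l => ceFilt_mono i (hb l), h⟩

lemma ceFilt_le {i j : ℕ} (hij : i ≤ j) : ceFilt g i ⊆ ceFilt g j := by
  induction j with
  | zero => simpa [Nat.le_zero.mp hij] using subset_rfl
  | succ j ih =>
    rcases Nat.lt_or_ge i (j+1) with h | h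
    · exact (ih (Nat.lt_succ_iff.mp h)).trans (ceFilt_mono j)
    · have : i = j + 1 := le_antisymm hij h
      subst this; exact subset_rfl

lemma smul_mem_ceFilt (r : ℝ) : ∀ i, ∀ v ∈ ceFilt g i, r • v ∈ ceFilt g i
  | 0, v, hv => by
      have : v = 0 := hv
      subst this; simpa using zero_mem_ceFilt 0
  | (i+1), v, ⟨m, a, b, ha, hb, h⟩ => by
      refine ⟨m, fun l => r • a l, b, fun l => smul_mem_ceFilt r i _ (ha l), hb, ?_⟩
      intro X Y
      have e := h X Y
      simp only at e
      simp only [LinearMap.smul_apply, smul_eq_mul]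
      rw [show -(r * v ⁅X, Y⁆) = r * -v ⁅X, Y⁆ by ring, e, Finset.mul_sum]
      exact Finset.sum_congr rfl fun l _ => by ring

lemma add_mem_ceFilt : ∀ i, ∀ v ∈ ceFilt g i, ∀ w ∈ ceFilt g i, v + w ∈ ceFilt g i
  | 0, v, hv, w, hw => by
      have hv' : v = 0 := hv
      have hw' : w = 0 := hw
      subst hv'; subst hw'; simpa using zero_mem_ceFilt 0
  | (i+1), v, ⟨m1, a1, b1, ha1, hb1, h1⟩, w, ⟨m2, a2, b2, ha2, hb2, h2⟩ => by
      refine ⟨m1 + m2, Fin.append a1 a2, Fin.append b1 b2, ?_, ?_, ?_⟩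
      · intro l
        refine Fin.addCases (fun l0 => ?_) (fun l0 => ?_) l
        · rw [Fin.append_left]; exact ha1 l0
        · rw [Fin.append_right]; exact ha2 l0
      · intro l
        refine Fin.addCases (fun l0 => ?_) (fun l0 => ?_) l
        · rw [Fin.append_left]; exact hb1 l0
        · rw [Fin.append_right]; exact hb2 l0
      · intro X Y
        rw [Fin.sum_univ_add]
        simp only [Fin.append_left, Fin.append_right]
        have e1 := h1 X Y
        have e2 := h2 X Y
        simp only at e1 e2
        simp only [LinearMap.add_apply]
        rw [show -((v ⁅X,Y⁆) + (w ⁅X,Y⁆)) = -v ⁅X,Y⁆ + -w ⁅X,Y⁆ by ring, e1, e2]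


set_option maxHeartbeats 1000000 in
lemma exists_flag_basis (g : Type) [LieRing g] [LieAlgebra ℝ g]
    [FiniteDimensional ℝ g] [LieRing.IsNilpotent g]
    (n : ℕ) (hn : Module.finrank ℝ g = n) :
    ∃ b : Module.Basis (Fin n) ℝ g, ∀ (i k : Fin n), (i : ℕ) ≤ (k : ℕ) → ∀ X : g,
      b.repr ⁅X, b k⁆ i = 0 := by
  obtain ⟨s, hs⟩ := LieModule.IsNilpotent.nilpotent ℝ g g
  set C : ℕ → Submodule ℝ g := fun m => (LieModule.lowerCentralSeries ℝ g g m : Submodule ℝ g) with hC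
  have hC0 : C 0 = ⊤ := by
    simp [hC, LieModule.lowerCentralSeries_zero]
  have hCs : C s = ⊥ := by
    simp [hC, hs]
  have hCanti : ∀ {m m' : ℕ}, m ≤ m' → C m' ≤ C m := by
    intro m m' h
    exact fun y hy =>
      (LieModule.antitone_lowerCentralSeries ℝ g g h) hy
  have hCbr : ∀ (m : ℕ) (X Y : g), Y ∈ C m → ⁅X, Y⁆ ∈ C (m + 1) := by
    intro m X Y hY
    have hY' : Y ∈ LieModule.lowerCentralSeries ℝ g g m := hY
    have : ⁅X, Y⁆ ∈ LieModule.lowerCentralSeries ℝ g g (m + 1) := by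
      rw [LieModule.lowerCentralSeries_succ]
      exact LieSubmodule.lie_mem_lie (LieSubmodule.mem_top X) hY'
    exact this
  set Sp : (ℕ → g) → ℕ → Submodule ℝ g :=
    fun x i => Submodule.span ℝ (x '' Set.Iio i) with hSp
  have key : ∀ j, j ≤ n → ∃ x : ℕ → g,
      LinearIndependent ℝ (fun i : Fin j => x i) ∧
      (∀ m, C m ≤ Sp x j ∨ Sp x j ≤ C m) ∧
      ∀ i, i + 1 ≤ j → ∀ (X Y : g), Y ∈ Sp x (i + 1) → ⁅X, Y⁆ ∈ Sp x i := by
    intro j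
    induction j with
    | zero =>
      intro _
      refine ⟨fun _ => 0, ?_, ?_, ?_⟩
      · exact linearIndependent_empty_type
      · intro m
        right
        have : Sp (fun _ => (0:g)) 0 = ⊥ := by
          rw [hSp]
          have h0 : Set.Iio (0:ℕ) = ∅ := by ext y; simp
          simp [h0]
        rw [this]; exact bot_le
      · intro i hi; omega
    | succ j ih =>
      intro hj1
      obtain ⟨x, li, comp, br⟩ := ih (by omega)
      have hrange : x '' Set.Iio j = Set.range (fun i : Fin j => x i) := by
        ext y
        constructor
        · rintro ⟨l, hl, rfl⟩; exact ⟨⟨l, hl⟩, rfl⟩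
        · rintro ⟨i, rfl⟩; exact ⟨i, i.isLt, rfl⟩
      have hrk : Module.finrank ℝ (Sp x j) = j := by
        rw [hSp]
        simp only
        have h := finrank_span_eq_card li
        rw [Fintype.card_fin, ← hrange] at h
        exact h
      have hne : ¬ C 0 ≤ Sp x j := by
        rw [hC0]
        intro h
        have h2 : Sp x j = ⊤ := top_le_iff.mp h
        rw [h2, finrank_top] at hrk
        omega
      classical
      set P := fun m => ¬ C m ≤ Sp x j with hP
      set M := Nat.findGreatest P s with hM
      have hPM : P M := Nat.findGreatest_spec (Nat.zero_le s) hne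
      have hgt : ∀ m, M < m → C m ≤ Sp x j := by
        intro m hm
        by_cases hms : m ≤ s
        · exact not_not.mp (Nat.findGreatest_is_greatest hm hms)
        · have h1 : C m ≤ C s := hCanti (by omega)
          rw [hCs] at h1
          exact h1.trans bot_le
      have hSM : Sp x j ≤ C M := (comp M).resolve_left hPM
      obtain ⟨v, hvC, hvS⟩ := SetLike.not_le_iff_exists.mp hPM
      set x' := Function.update x j v with hx'
      have hx'lt : ∀ l, l ≠ j → x' l = x l := by
        intro l hl
        rw [hx', Function.update_of_ne hl]
      have hx'j : x' j = v := by rw [hx', Function.update_self]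
      have hSeq : ∀ i, i ≤ j → Sp x' i = Sp x i := by
        intro i hi
        rw [hSp]
        simp only
        congr 1
        ext y
        constructor
        · rintro ⟨l, hl, rfl⟩
          rw [Set.mem_Iio] at hl
          exact ⟨l, Set.mem_Iio.mpr hl, (hx'lt l (by omega)).symm⟩
        · rintro ⟨l, hl, rfl⟩
          rw [Set.mem_Iio] at hl
          exact ⟨l, Set.mem_Iio.mpr hl, hx'lt l (by omega)⟩
      have hS' : Sp x' (j + 1) = Submodule.span ℝ {v} ⊔ Sp x j := by
        rw [hSp]
        simp only
        have himg : x' '' Set.Iio (j + 1) = insert v (x '' Set.Iio j) := by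
          ext y
          simp only [Set.mem_image, Set.mem_Iio, Set.mem_insert_iff]
          constructor
          · rintro ⟨l, hl, rfl⟩
            rcases Nat.lt_or_ge l j with h | h
            · exact Or.inr ⟨l, h, (hx'lt l (by omega)).symm⟩
            · have : l = j := by omega
              subst this
              exact Or.inl hx'j
          · rintro (rfl | ⟨l, hl, rfl⟩)
            · exact ⟨j, by omega, hx'j⟩
            · exact ⟨l, by omega, hx'lt l (by omega)⟩
        rw [himg, Submodule.span_insert]
      have hS'leCM : Sp x' (j + 1) ≤ C M := by
        rw [hS']
        refine sup_le ?_ hSM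
        rw [Submodule.span_le]
        rintro y rfl
        exact hvC
      refine ⟨x', ?_, ?_, ?_⟩
      · have heq : (fun i : Fin (j+1) => x' (i : ℕ)) =
            Fin.snoc (fun i : Fin j => x (i : ℕ)) v := by
          funext i
          refine Fin.lastCases ?_ ?_ i
          · rw [Fin.snoc_last]
            simpa using hx'j
          · intro i0
            rw [Fin.snoc_castSucc]
            simpa using hx'lt i0 (by omega)
        rw [heq]
        refine linearIndependent_fin_snoc.mpr ⟨li, ?_⟩
        rw [← hrange]
        exact hvS
      · intro m
        rcases le_or_gt m M with h | h
        · right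
          exact hS'leCM.trans (hCanti h)
        · left
          refine (hgt m h).trans ?_
          rw [hS']
          exact le_sup_right
      · intro i hi X Y hY
        rcases Nat.lt_or_ge (i + 1) (j + 1) with h | h
        · rw [hSeq (i+1) (by omega)] at hY
          rw [hSeq i (by omega)]
          exact br i (by omega) X Y hY
        · have hij : i = j := by omega
          subst hij
          rw [hSeq i le_rfl]
          have h1 : ⁅X, Y⁆ ∈ C (M + 1) := hCbr M X Y (hS'leCM hY)
          exact hgt (M + 1) (by omega) h1
  obtain ⟨x, li, _, br⟩ := key n le_rfl
  set v : Fin n → g := fun i => x (n - 1 - (i : ℕ)) with hv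
  have li' : LinearIndependent ℝ v := by
    have hσinj : Function.Injective (fun i : Fin n => (⟨n - 1 - (i : ℕ), by
        have := i.isLt; omega⟩ : Fin n)) := by
      intro a b hab
      have h1 : n - 1 - (a : ℕ) = n - 1 - (b : ℕ) := congrArg Fin.val hab
      have ha := a.isLt
      have hb := b.isLt
      ext
      omega
    exact li.comp _ hσinj
  have hspan : ⊤ ≤ Submodule.span ℝ (Set.range v) := by
    have : Submodule.span ℝ (Set.range v) = ⊤ := Submodule.eq_top_of_finrank_eq (by
      rw [finrank_span_eq_card li', Fintype.card_fin, hn])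
    rw [this]
  refine ⟨Module.Basis.mk li' hspan, ?_⟩
  intro i k hik X
  have hbcoe : ∀ l : Fin n, Module.Basis.mk li' hspan l = x (n - 1 - (l : ℕ)) := by
    intro l
    rw [Module.Basis.mk_apply]
  set m := n - 1 - (k : ℕ) with hm
  have hkn := k.isLt
  have hin := i.isLt
  have hbk : (Module.Basis.mk li' hspan) k ∈ Sp x (m + 1) := by
    rw [hbcoe]
    exact Submodule.subset_span ⟨m, Set.mem_Iio.mpr (by omega), rfl⟩
  have hbr : ⁅X, (Module.Basis.mk li' hspan) k⁆ ∈ Sp x m :=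
    br m (by omega) X _ hbk
  have hker : Sp x m ≤ LinearMap.ker ((Module.Basis.mk li' hspan).coord i) := by
    rw [hSp]
    simp only
    rw [Submodule.span_le]
    rintro y ⟨l, hl, rfl⟩
    rw [Set.mem_Iio] at hl
    simp only [Set.mem_setOf_eq, SetLike.mem_coe, LinearMap.mem_ker, Module.Basis.coord_apply]
    have hxl : x l = (Module.Basis.mk li' hspan) ⟨n - 1 - l, by omega⟩ := by
      rw [hbcoe]
      congr 1
      simp only
      omega
    rw [hxl, Module.Basis.repr_self_apply]
    have : ¬ ((⟨n - 1 - l, by omega⟩ : Fin n) = i) := by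
      intro hcon
      have := congrArg Fin.val hcon
      simp only at this
      omega
    simp [this]
  have := hker hbr
  simpa [Module.Basis.coord_apply] using this


end Helpers

/-- An `n`-dimensional nilpotent real Lie algebra admits a basis
`e¹, …, eⁿ` of `g*` such that each `deⁱ` (the 2-form `(X,Y) ↦ −eⁱ(⁅X,Y⁆)`) lies in the
span of `{eʲ ∧ eᵏ : j < k < i}`; in particular, the filtration `g*₁ = ker d`,
`g*ᵢ = {v : dv ∈ Λ²g*ᵢ₋₁}` exhausts `g*` at some finite stage `s`. -/
theorem nilpotent_exists_filtered_basis
    (g : Type) [LieRing g] [LieAlgebra ℝ g] [FiniteDimensional ℝ g]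
    [LieRing.IsNilpotent g]
    (n : ℕ) (hn : Module.finrank ℝ g = n) :
    (∃ e : Module.Basis (Fin n) ℝ (Module.Dual ℝ g),
      ∀ i : Fin n, ∃ c : Fin n → Fin n → ℝ, ∀ X Y : g,
        -(e i ⁅X, Y⁆) = ∑ j : Fin n, ∑ k : Fin n,
          (if (j : ℕ) < (k : ℕ) ∧ (k : ℕ) < (i : ℕ) then
            c j k * (e j X * e k Y - e j Y * e k X) else 0)) ∧
    (∃ s : ℕ, ceFilt g s = Set.univ) := by
  classical
  obtain ⟨b, hb⟩ := exists_flag_basis g n hn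
  set e : Module.Basis (Fin n) ℝ (Module.Dual ℝ g) := b.dualBasis with he
  have sum_lie' : ∀ (f : Fin n → g) (Y : g), ⁅∑ j, f j, Y⁆ = ∑ j, ⁅f j, Y⁆ := by
    intro f Y
    exact map_sum (AddMonoidHom.mk' (fun X => ⁅X, Y⁆) (fun a c => add_lie a c Y)) f Finset.univ
  have lie_sum' : ∀ (X : g) (f : Fin n → g), ⁅X, ∑ k, f k⁆ = ∑ k, ⁅X, f k⁆ := by
    intro X f
    exact map_sum (AddMonoidHom.mk' (fun Y => ⁅X, Y⁆) (fun a c => lie_add X a c)) f Finset.univ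
  have hvan : ∀ (i j k : Fin n), ((i : ℕ) ≤ (k : ℕ) ∨ (i : ℕ) ≤ (j : ℕ)) →
      e i ⁅b j, b k⁆ = 0 := by
    intro i j k h
    rcases h with h | h
    · rw [he, Module.Basis.dualBasis_apply]
      exact hb i k h (b j)
    · have hskew : ⁅b j, b k⁆ = -⁅b k, b j⁆ := (lie_skew _ _).symm
      rw [hskew, map_neg, he, Module.Basis.dualBasis_apply, hb i j h (b k), neg_zero]
  have hkey : ∀ (i : Fin n) (X Y : g), e i ⁅X, Y⁆ =
      ∑ j : Fin n, ∑ k : Fin n, e j X * e k Y * e i ⁅b j, b k⁆ := by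
    intro i X Y
    conv_lhs => rw [← b.sum_repr X, ← b.sum_repr Y]
    rw [sum_lie', map_sum]
    refine Finset.sum_congr rfl fun j _ => ?_
    rw [smul_lie, map_smul, smul_eq_mul, lie_sum', map_sum, Finset.mul_sum]
    refine Finset.sum_congr rfl fun k _ => ?_
    rw [lie_smul, map_smul, smul_eq_mul]
    simp only [he, Module.Basis.dualBasis_apply]
    ring
  have part1 : ∀ i : Fin n, ∃ c : Fin n → Fin n → ℝ, ∀ X Y : g,
      -(e i ⁅X, Y⁆) = ∑ j : Fin n, ∑ k : Fin n,
        (if (j : ℕ) < (k : ℕ) ∧ (k : ℕ) < (i : ℕ) then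
          c j k * (e j X * e k Y - e j Y * e k X) else 0) := by
    intro i
    refine ⟨fun j k => -(e i ⁅b j, b k⁆), ?_⟩
    intro X Y
    set t : Fin n → Fin n → ℝ := fun j k => e i ⁅b j, b k⁆ with ht
    have htanti : ∀ j k, t k j = -t j k := by
      intro j k
      rw [ht]
      simp only
      rw [show ⁅b k, b j⁆ = -⁅b j, b k⁆ from (lie_skew _ _).symm, map_neg]
    set F : Fin n → Fin n → ℝ := fun j k =>
      -(e j X * e k Y * t j k) -
        (if (j : ℕ) < (k : ℕ) ∧ (k : ℕ) < (i : ℕ) then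
          (-(t j k)) * (e j X * e k Y - e j Y * e k X) else 0) with hF
    have hFanti : ∀ j k, F j k + F k j = 0 := by
      intro j k
      by_cases h1 : (j : ℕ) < (k : ℕ) ∧ (k : ℕ) < (i : ℕ)
      · have h2 : ¬((k : ℕ) < (j : ℕ) ∧ (j : ℕ) < (i : ℕ)) := by omega
        rw [hF]
        simp only [if_pos h1, if_neg h2]
        rw [htanti j k]
        ring
      · by_cases h2 : (k : ℕ) < (j : ℕ) ∧ (j : ℕ) < (i : ℕ)
        · rw [hF]
          simp only [if_pos h2, if_neg h1]
          rw [htanti j k]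
          ring
        · have hz : t j k = 0 ∧ t k j = 0 := by
            rcases lt_trichotomy (j : ℕ) (k : ℕ) with h | h | h
            · have hik : (i : ℕ) ≤ (k : ℕ) := by omega
              exact ⟨hvan i j k (Or.inl hik), hvan i k j (Or.inr hik)⟩
            · have hjk : j = k := Fin.ext h
              subst hjk
              constructor <;> (rw [ht]; simp only [lie_self, map_zero])
            · have hij : (i : ℕ) ≤ (j : ℕ) := by omega
              exact ⟨hvan i j k (Or.inr hij), hvan i k j (Or.inl hij)⟩
          rw [hF]
          simp only [if_neg h1, if_neg h2, hz.1, hz.2]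
          ring
    have hS : (∑ j : Fin n, ∑ k : Fin n, F j k) = 0 := by
      have h2 : (∑ j : Fin n, ∑ k : Fin n, F j k) + (∑ j : Fin n, ∑ k : Fin n, F k j) = 0 := by
        rw [← Finset.sum_add_distrib]
        rw [show (∑ j : Fin n, ((∑ k : Fin n, F j k) + ∑ k : Fin n, F k j)) =
            ∑ j : Fin n, ∑ k : Fin n, (F j k + F k j) from
          Finset.sum_congr rfl fun j _ => (Finset.sum_add_distrib).symm]
        simp [hFanti]
      have h3 : (∑ j : Fin n, ∑ k : Fin n, F k j) = ∑ j : Fin n, ∑ k : Fin n, F j k :=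
        Finset.sum_comm
      linarith
    have hexp : (∑ j : Fin n, ∑ k : Fin n, F j k) =
        (∑ j : Fin n, ∑ k : Fin n, -(e j X * e k Y * t j k)) -
          ∑ j : Fin n, ∑ k : Fin n,
            (if (j : ℕ) < (k : ℕ) ∧ (k : ℕ) < (i : ℕ) then
              (-(t j k)) * (e j X * e k Y - e j Y * e k X) else 0) := by
      simp only [hF, Finset.sum_sub_distrib]
    have hneg : (∑ j : Fin n, ∑ k : Fin n, -(e j X * e k Y * t j k)) =
        -(∑ j : Fin n, ∑ k : Fin n, e j X * e k Y * t j k) := by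
      simp
    have hgoal := hS
    rw [hexp, hneg] at hgoal
    have hk2 : e i ⁅X, Y⁆ = ∑ j : Fin n, ∑ k : Fin n, e j X * e k Y * t j k :=
      hkey i X Y
    have : -(e i ⁅X, Y⁆) = ∑ j : Fin n, ∑ k : Fin n,
        (if (j : ℕ) < (k : ℕ) ∧ (k : ℕ) < (i : ℕ) then
          (-(t j k)) * (e j X * e k Y - e j Y * e k X) else 0) := by
      rw [hk2]
      linarith
    rw [this]
  have e_mem : ∀ N : ℕ, ∀ i : Fin n, (i : ℕ) < N → e i ∈ ceFilt g ((i : ℕ) + 1) := by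
    intro N
    induction N with
    | zero => intro i h; omega
    | succ N ih =>
      intro i hi
      rcases Nat.lt_or_ge (i : ℕ) N with hlt | hge
      · exact ih i hlt
      obtain ⟨c, hc⟩ := part1 i
      set q : Fin (n * n) → Fin n × Fin n := fun p => finProdFinEquiv.symm p with hq
      refine ⟨n * n,
        (fun p => if ((q p).1 : ℕ) < ((q p).2 : ℕ) ∧ ((q p).2 : ℕ) < (i : ℕ) then
          c (q p).1 (q p).2 • e (q p).1 else 0),
        (fun p => if ((q p).1 : ℕ) < ((q p).2 : ℕ) ∧ ((q p).2 : ℕ) < (i : ℕ) then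
          e (q p).2 else 0), ?_, ?_, ?_⟩
      · intro p
        beta_reduce
        by_cases hcond : ((q p).1 : ℕ) < ((q p).2 : ℕ) ∧ ((q p).2 : ℕ) < (i : ℕ)
        · rw [if_pos hcond]
          refine smul_mem_ceFilt _ _ _ (ceFilt_le (show ((q p).1 : ℕ) + 1 ≤ (i : ℕ) by omega) ?_)
          exact ih (q p).1 (by omega)
        · rw [if_neg hcond]
          exact zero_mem_ceFilt _
      · intro p
        beta_reduce
        by_cases hcond : ((q p).1 : ℕ) < ((q p).2 : ℕ) ∧ ((q p).2 : ℕ) < (i : ℕ)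
        · rw [if_pos hcond]
          refine ceFilt_le (show ((q p).2 : ℕ) + 1 ≤ (i : ℕ) by omega) ?_
          exact ih (q p).2 (by omega)
        · rw [if_neg hcond]
          exact zero_mem_ceFilt _
      · intro X Y
        beta_reduce
        rw [hc X Y]
        refine ((Fintype.sum_prod_type (fun r : Fin n × Fin n =>
            if (r.1 : ℕ) < (r.2 : ℕ) ∧ (r.2 : ℕ) < (i : ℕ) then
              c r.1 r.2 * (e r.1 X * e r.2 Y - e r.1 Y * e r.2 X) else 0)).symm).trans
          (Fintype.sum_equiv finProdFinEquiv _ _ fun r => ?_)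
        have hqr : q (finProdFinEquiv r) = r := by rw [hq]; simp
        rw [hqr]
        by_cases hcond : (r.1 : ℕ) < (r.2 : ℕ) ∧ (r.2 : ℕ) < (i : ℕ)
        · rw [if_pos hcond, if_pos hcond, if_pos hcond]
          simp only [LinearMap.smul_apply, smul_eq_mul]
          ring
        · rw [if_neg hcond, if_neg hcond, if_neg hcond]
          simp

  constructor
  · refine ⟨e, fun i => ?_⟩
    obtain ⟨c, hc⟩ := part1 i
    exact ⟨c, hc⟩
  · refine ⟨n + 1, Set.eq_univ_iff_forall.mpr fun v => ?_⟩
    have hsumcl : ∀ (f : Fin n → Module.Dual ℝ g),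
        (∀ i, f i ∈ ceFilt g (n + 1)) → (∑ i, f i) ∈ ceFilt g (n + 1) := by
      intro f hf
      exact Finset.sum_induction f (· ∈ ceFilt g (n + 1))
        (fun a c ha hc => add_mem_ceFilt (n + 1) a ha c hc)
        (zero_mem_ceFilt (n + 1)) (fun i _ => hf i)
    rw [← e.sum_repr v]
    refine hsumcl _ fun i => ?_
    refine smul_mem_ceFilt _ _ _ (ceFilt_le (show (i : ℕ) + 1 ≤ n + 1 by omega) ?_)
    exact e_mem n i i.isLt


end GKTest
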